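/- Let C be a braided monoidal category and A a Hopf monoid in C. Then the morphism h_A = (μ ⊗ A) ∘ (A ⊗ Δ) : A ⊗ A → A ⊗ A (composed with the appropriate associativity isomorphisms) is an isomorphism, with inverse h_A⁻¹ = (μ ⊗ A) ∘ (A ⊗ S ⊗ A) ∘ (A ⊗ Δ); that is, h_A ∘ h_A⁻¹ = h_A⁻¹ ∘ h_A = id_{A ⊗ A}. -/

import Mathlib

open CategoryTheory MonoidalCategory

universe v u

/-- For a Hopf monoid `A` in a braided monoidal category, the morphism
`h_A = (μ ⊗ A) ∘ (A ⊗ Δ)` is an isomorphism with inverse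
`(μ ⊗ A) ∘ (A ⊗ S ⊗ A) ∘ (A ⊗ Δ)`. -/
theorem fence_iso
    {C : Type u} [Category.{v} C] [MonoidalCategory C] [BraidedCategory C]
    (A : C) (mul : A ⊗ A ⟶ A) (unit : 𝟙_ C ⟶ A)
    (comul : A ⟶ A ⊗ A) (counit : A ⟶ 𝟙_ C) (anti : A ⟶ A)
    (h_mul_assoc : (mul ▷ A) ≫ mul = (α_ A A A).hom ≫ (A ◁ mul) ≫ mul)
    (h_one_mul : (unit ▷ A) ≫ mul = (λ_ A).hom)
    (h_mul_one : (A ◁ unit) ≫ mul = (ρ_ A).hom)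
    (h_coassoc : comul ≫ (comul ▷ A) ≫ (α_ A A A).hom = comul ≫ (A ◁ comul))
    (h_counit_left : comul ≫ (counit ▷ A) ≫ (λ_ A).hom = 𝟙 A)
    (h_counit_right : comul ≫ (A ◁ counit) ≫ (ρ_ A).hom = 𝟙 A)
    (h_mul_comul : mul ≫ comul
      = (comul ⊗ₘ comul) ≫ (α_ A A (A ⊗ A)).hom ≫ (A ◁ (α_ A A A).inv) ≫
          (A ◁ ((β_ A A).hom ▷ A)) ≫ (A ◁ (α_ A A A).hom) ≫ (α_ A A (A ⊗ A)).inv ≫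
          (mul ⊗ₘ mul))
    (h_counit_mul : mul ≫ counit = (counit ⊗ₘ counit) ≫ (λ_ (𝟙_ C)).hom)
    (h_comul_unit : unit ≫ comul = (λ_ (𝟙_ C)).inv ≫ (unit ⊗ₘ unit))
    (h_counit_unit : unit ≫ counit = 𝟙 (𝟙_ C))
    (h_antipode_left : comul ≫ (anti ▷ A) ≫ mul = counit ≫ unit)
    (h_antipode_right : comul ≫ (A ◁ anti) ≫ mul = counit ≫ unit)
    :
    ((A ◁ comul) ≫ (α_ A A A).inv ≫ (mul ▷ A)) ≫
        ((A ◁ comul) ≫ (A ◁ (anti ▷ A)) ≫ (α_ A A A).inv ≫ (mul ▷ A)) = 𝟙 (A ⊗ A) ∧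
      ((A ◁ comul) ≫ (A ◁ (anti ▷ A)) ≫ (α_ A A A).inv ≫ (mul ▷ A)) ≫
        ((A ◁ comul) ≫ (α_ A A A).inv ≫ (mul ▷ A)) = 𝟙 (A ⊗ A) := by
  have e1 : comul ≫ (counit ▷ A) = (λ_ A).inv := by
    rw [← cancel_mono (λ_ A).hom, Category.assoc, h_counit_left, Iso.inv_hom_id]
  have fin : (A ◁ ((λ_ A).inv ≫ unit ▷ A)) ≫ (α_ A A A).inv ≫ (mul ▷ A)
      = 𝟙 (A ⊗ A) := by
    rw [MonoidalCategory.whiskerLeft_comp]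
    slice_lhs 2 3 => rw [associator_inv_naturality_middle]
    slice_lhs 3 4 => rw [← comp_whiskerRight, h_mul_one]
    rw [triangle_assoc_comp_right]
    simp
  constructor
  · slice_lhs 3 4 => rw [← whisker_exchange]
    slice_lhs 4 5 => rw [← whisker_exchange]
    slice_lhs 5 6 => rw [associator_inv_naturality_left]
    slice_lhs 6 7 => rw [← comp_whiskerRight, h_mul_assoc,
      comp_whiskerRight, comp_whiskerRight]
    slice_lhs 2 3 => rw [← associator_inv_naturality_right]
    slice_lhs 3 4 => rw [← associator_inv_naturality_right]
    slice_lhs 4 6 => rw [pentagon_inv_inv_hom_inv_inv]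
    slice_lhs 5 6 => rw [← associator_inv_naturality_middle]
    slice_lhs 1 5 =>
      rw [← MonoidalCategory.whiskerLeft_comp, ← MonoidalCategory.whiskerLeft_comp,
        ← MonoidalCategory.whiskerLeft_comp, ← MonoidalCategory.whiskerLeft_comp]
    have inner : comul ≫ (A ◁ comul) ≫ (A ◁ (anti ▷ A)) ≫ (α_ A A A).inv ≫ (mul ▷ A)
        = (λ_ A).inv ≫ unit ▷ A := by
      rw [← Category.assoc comul, ← h_coassoc]
      slice_lhs 3 4 => rw [← associator_naturality_middle]
      slice_lhs 4 5 => rw [Iso.hom_inv_id]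
      simp only [Category.id_comp, Category.comp_id]
      slice_lhs 2 4 => rw [← comp_whiskerRight, ← comp_whiskerRight, h_antipode_right]
      rw [comp_whiskerRight, ← Category.assoc, e1]
    rw [inner]
    simp only [Category.assoc]
    rw [fin]
  · slice_lhs 4 5 => rw [← whisker_exchange]
    slice_lhs 5 6 => rw [associator_inv_naturality_left]
    slice_lhs 6 7 => rw [← comp_whiskerRight, h_mul_assoc,
      comp_whiskerRight, comp_whiskerRight]
    slice_lhs 3 4 => rw [← associator_inv_naturality_right]
    slice_lhs 2 3 => rw [← MonoidalCategory.whiskerLeft_comp, ← whisker_exchange,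
      MonoidalCategory.whiskerLeft_comp]
    slice_lhs 4 6 => rw [pentagon_inv_inv_hom_inv_inv]
    slice_lhs 5 6 => rw [← associator_inv_naturality_middle]
    slice_lhs 1 5 =>
      rw [← MonoidalCategory.whiskerLeft_comp, ← MonoidalCategory.whiskerLeft_comp,
        ← MonoidalCategory.whiskerLeft_comp, ← MonoidalCategory.whiskerLeft_comp]
    have inner : comul ≫ (A ◁ comul) ≫ (anti ▷ (A ⊗ A)) ≫ (α_ A A A).inv ≫ (mul ▷ A)
        = (λ_ A).inv ≫ unit ▷ A := by
      rw [← Category.assoc comul, ← h_coassoc]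
      slice_lhs 4 5 => rw [associator_inv_naturality_left]
      slice_lhs 3 4 => rw [Iso.hom_inv_id]
      simp only [Category.id_comp, Category.comp_id]
      slice_lhs 2 4 => rw [← comp_whiskerRight, ← comp_whiskerRight, h_antipode_left]
      rw [comp_whiskerRight, ← Category.assoc, e1]
    rw [inner]
    simp only [Category.assoc]
    rw [fin]
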